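/- Let n and ℓ be positive integers and A, B ∈ ℝ^{n×ℓ}. Then there exists an orthogonal matrix W ∈ O(n) such that WABᵀ is a positive semidefinite symmetric matrix and d_{O(n)}(A,B) = ‖WA − B‖ = d_{U(n)}(A,B), where A and B are regarded as complex matrices in the last expression. In particular, d_{O(n)}(A,B) = d_{U(n)}(A,B) for all real A, B. -/

import Mathlib

open Matrix
open scoped ComplexOrder

/-- Frobenius norm of a real matrix: `‖A‖ = √(trace (A Aᵀ))`. -/
noncomputable def frobR {n l : ℕ} (A : Matrix (Fin n) (Fin l) ℝ) : ℝ :=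
  Real.sqrt (Matrix.trace (A * Aᵀ))

/-- Frobenius norm of a complex matrix: `‖A‖ = √(trace (A Aᴴ))`. -/
noncomputable def frobC {n l : ℕ} (A : Matrix (Fin n) (Fin l) ℂ) : ℝ :=
  Real.sqrt (Matrix.trace (A * Aᴴ)).re

open Classical in
/-- The unique positive semidefinite square root of a positive semidefinite real
symmetric matrix (junk value `0` if `M` is not positive semidefinite). -/
noncomputable def matSqrtR {k : ℕ} (M : Matrix (Fin k) (Fin k) ℝ) : Matrix (Fin k) (Fin k) ℝ :=
  if h : M.PosSemidef then
    (h.1.eigenvectorUnitary : Matrix (Fin k) (Fin k) ℝ) *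
      Matrix.diagonal (((↑) : ℝ → ℝ) ∘ Real.sqrt ∘ h.1.eigenvalues) *
      (star h.1.eigenvectorUnitary : Matrix (Fin k) (Fin k) ℝ)
  else 0

open Classical in
/-- The unique positive semidefinite square root of a positive semidefinite hermitian
matrix (junk value `0` if `M` is not positive semidefinite). -/
noncomputable def matSqrtC {k : ℕ} (M : Matrix (Fin k) (Fin k) ℂ) : Matrix (Fin k) (Fin k) ℂ :=
  if h : M.PosSemidef then
    (h.1.eigenvectorUnitary : Matrix (Fin k) (Fin k) ℂ) *
      Matrix.diagonal (((↑) : ℝ → ℂ) ∘ Real.sqrt ∘ h.1.eigenvalues) *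
      (star h.1.eigenvectorUnitary : Matrix (Fin k) (Fin k) ℂ)
  else 0

/-- Orbit distance for the orthogonal group `O(n)` acting by left multiplication. -/
noncomputable def dO {n l : ℕ} (A B : Matrix (Fin n) (Fin l) ℝ) : ℝ :=
  sInf {x | ∃ W ∈ Matrix.orthogonalGroup (Fin n) ℝ, x = frobR (W * A - B)}

/-- Orbit distance for the unitary group `U(n)` acting by left multiplication. -/
noncomputable def dU {n l : ℕ} (A B : Matrix (Fin n) (Fin l) ℂ) : ℝ :=
  sInf {x | ∃ W ∈ Matrix.unitaryGroup (Fin n) ℂ, x = frobC (W * A - B)}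

/-- `q𝟙ᵀ` : the `n × l` matrix each of whose columns equals `q` (real case). -/
def colMatR {n l : ℕ} (q : Fin n → ℝ) : Matrix (Fin n) (Fin l) ℝ :=
  Matrix.of fun i _ => q i

/-- `q𝟙ᵀ` : the `n × l` matrix each of whose columns equals `q` (complex case). -/
def colMatC {n l : ℕ} (q : Fin n → ℂ) : Matrix (Fin n) (Fin l) ℂ :=
  Matrix.of fun i _ => q i

/-- Orbit distance for the euclidean group `E(n) = O(n) ⋉ ℝⁿ` acting columnwise. -/
noncomputable def dE {n l : ℕ} (A B : Matrix (Fin n) (Fin l) ℝ) : ℝ :=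
  sInf {x | ∃ P ∈ Matrix.orthogonalGroup (Fin n) ℝ, ∃ q : Fin n → ℝ,
    x = frobR (P * A + colMatR q - B)}

/-- Orbit distance for the complex euclidean group `F(n) = U(n) ⋉ ℂⁿ` acting columnwise. -/
noncomputable def dF {n l : ℕ} (A B : Matrix (Fin n) (Fin l) ℂ) : ℝ :=
  sInf {x | ∃ P ∈ Matrix.unitaryGroup (Fin n) ℂ, ∃ q : Fin n → ℂ,
    x = frobC (P * A + colMatC q - B)}

/-- Column-centering `π` : subtract from each column the average of all columns (real case). -/
noncomputable def centerR {n l : ℕ} (A : Matrix (Fin n) (Fin l) ℝ) : Matrix (Fin n) (Fin l) ℝ :=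
  Matrix.of fun i j => A i j - (∑ k, A i k) / (l : ℝ)

/-- Column-centering `π_ℂ` : subtract from each column the average of all columns (complex case). -/
noncomputable def centerC {n l : ℕ} (A : Matrix (Fin n) (Fin l) ℂ) : Matrix (Fin n) (Fin l) ℂ :=
  Matrix.of fun i j => A i j - (∑ k, A i k) / (l : ℂ)

lemma mapC_mul {n m k : ℕ} (X : Matrix (Fin n) (Fin m) ℝ) (Y : Matrix (Fin m) (Fin k) ℝ) :
    (X * Y).map Complex.ofReal = X.map Complex.ofReal * Y.map Complex.ofReal := by
  ext i j
  simp [Matrix.mul_apply, Matrix.map_apply]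

lemma mapC_conjTranspose {n m : ℕ} (X : Matrix (Fin n) (Fin m) ℝ) :
    (X.map Complex.ofReal)ᴴ = Xᵀ.map Complex.ofReal := by
  ext i j
  simp [Matrix.conjTranspose_apply, Matrix.map_apply, Complex.conj_ofReal]

lemma mapC_sub {n m : ℕ} (X Y : Matrix (Fin n) (Fin m) ℝ) :
    (X - Y).map Complex.ofReal = X.map Complex.ofReal - Y.map Complex.ofReal := by
  ext i j
  simp [Matrix.map_apply]

lemma trace_mapC_re {n : ℕ} (X : Matrix (Fin n) (Fin n) ℝ) :
    (Matrix.trace (X.map Complex.ofReal)).re = Matrix.trace X := by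
  simp [Matrix.trace, Matrix.diag, Matrix.map_apply, Complex.re_sum]

lemma mapC_unitary {n : ℕ} {X : Matrix (Fin n) (Fin n) ℝ}
    (hX : X ∈ Matrix.orthogonalGroup (Fin n) ℝ) :
    X.map Complex.ofReal ∈ Matrix.unitaryGroup (Fin n) ℂ := by
  rw [Matrix.mem_unitaryGroup_iff']
  have h1 : Xᵀ * X = 1 := by
    have := Matrix.mem_unitaryGroup_iff'.mp hX
    rwa [Matrix.star_eq_conjTranspose, Matrix.conjTranspose_eq_transpose_of_trivial] at this
  rw [Matrix.star_eq_conjTranspose, mapC_conjTranspose, ← mapC_mul, h1]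
  ext i j
  simp [Matrix.map_apply, Matrix.one_apply, apply_ite Complex.ofReal]

open scoped MatrixOrder in
lemma psd_sqrt {𝕜 : Type*} [RCLike 𝕜] {n : ℕ} {X : Matrix (Fin n) (Fin n) 𝕜}
    (hX : X.PosSemidef) : ∃ S : Matrix (Fin n) (Fin n) 𝕜, S.PosSemidef ∧ S * S = X :=
  ⟨CFC.sqrt X, (CFC.sqrt_nonneg X).posSemidef, CFC.sqrt_mul_sqrt_self X hX.nonneg⟩

lemma mapC_posSemidef {n : ℕ} {X : Matrix (Fin n) (Fin n) ℝ} (hX : X.PosSemidef) :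
    (X.map Complex.ofReal).PosSemidef := by
  obtain ⟨S, hSp, hR⟩ := psd_sqrt hX
  have hH : Sᴴ = S := hSp.1
  have hT : Sᵀ = S := by
    rw [← Matrix.conjTranspose_eq_transpose_of_trivial, hH]
  have h2 : X.map Complex.ofReal
      = (S.map Complex.ofReal)ᴴ * (S.map Complex.ofReal) := by
    rw [mapC_conjTranspose, ← mapC_mul, hT, hR]
  rw [h2]
  exact Matrix.posSemidef_conjTranspose_mul_self _

lemma expand_trace {n l : ℕ} (A B : Matrix (Fin n) (Fin l) ℂ) {V : Matrix (Fin n) (Fin n) ℂ}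
    (hV : Vᴴ * V = 1) :
    Matrix.trace ((V * A - B) * (V * A - B)ᴴ)
      = Matrix.trace (A * Aᴴ) + Matrix.trace (B * Bᴴ)
        - Matrix.trace (V * (A * Bᴴ)) - star (Matrix.trace (V * (A * Bᴴ))) := by
  have e1 : (V * A - B) * (V * A - B)ᴴ
      = V * A * Aᴴ * Vᴴ - V * (A * Bᴴ) - B * Aᴴ * Vᴴ + B * Bᴴ := by
    rw [Matrix.conjTranspose_sub, Matrix.conjTranspose_mul, Matrix.sub_mul, Matrix.mul_sub,
      Matrix.mul_sub]
    simp only [Matrix.mul_assoc]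
    abel
  have e2 : Matrix.trace (V * A * Aᴴ * Vᴴ) = Matrix.trace (A * Aᴴ) := by
    rw [Matrix.trace_mul_comm (V * A * Aᴴ) Vᴴ]
    congr 1
    rw [← Matrix.mul_assoc, ← Matrix.mul_assoc, hV, Matrix.one_mul]
  have e3 : Matrix.trace (B * Aᴴ * Vᴴ) = star (Matrix.trace (V * (A * Bᴴ))) := by
    rw [← Matrix.trace_conjTranspose]
    congr 1
    simp only [Matrix.conjTranspose_mul, Matrix.conjTranspose_conjTranspose, mul_assoc]
  rw [e1]
  simp only [Matrix.trace_add, Matrix.trace_sub, e2, e3]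
  ring

lemma frob_formula {n l : ℕ} (A B : Matrix (Fin n) (Fin l) ℂ) {V : Matrix (Fin n) (Fin n) ℂ}
    (hV : Vᴴ * V = 1) :
    Real.sqrt (Matrix.trace ((V * A - B) * (V * A - B)ᴴ)).re = Real.sqrt
      ((Matrix.trace (A * Aᴴ)).re + (Matrix.trace (B * Bᴴ)).re
        - 2 * (Matrix.trace (V * (A * Bᴴ))).re) := by
  rw [expand_trace A B hV]
  congr 1
  simp only [Complex.sub_re, Complex.add_re, RCLike.star_def, Complex.conj_re]
  ring

lemma polar_real {n : ℕ} (M : Matrix (Fin n) (Fin n) ℝ) :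
    ∃ W ∈ Matrix.orthogonalGroup (Fin n) ℝ, (W * M).PosSemidef := by
  have hS : (Mᵀ * M).PosSemidef := by
    simpa [Matrix.conjTranspose_eq_transpose_of_trivial] using
      Matrix.posSemidef_conjTranspose_mul_self M
  have hH : (Mᵀ * M).IsHermitian := hS.1
  set d : Fin n → ℝ := hH.eigenvalues with hd
  set Q : Matrix (Fin n) (Fin n) ℝ := (hH.eigenvectorUnitary : Matrix (Fin n) (Fin n) ℝ) with hQdef
  have hQmem : Q ∈ Matrix.unitaryGroup (Fin n) ℝ := hH.eigenvectorUnitary.2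
  have hQ1 : star Q * Q = 1 := Matrix.mem_unitaryGroup_iff'.mp hQmem
  have hQ2 : Q * star Q = 1 := Matrix.mem_unitaryGroup_iff.mp hQmem
  have hspec : Mᵀ * M = Q * Matrix.diagonal d * star Q := by
    have := hH.spectral_theorem
    simpa using this
  have hdnn : ∀ i, 0 ≤ d i := fun i => hS.eigenvalues_nonneg i
  set g : Fin n → ℝ := fun i => Real.sqrt (d i) with hg
  have hgnn : ∀ i, 0 ≤ g i := fun i => Real.sqrt_nonneg _
  set C : Matrix (Fin n) (Fin n) ℝ := M * Q with hC
  have hstarQ : star Q = Qᵀ := by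
    rw [Matrix.star_eq_conjTranspose, Matrix.conjTranspose_eq_transpose_of_trivial]
  have hCC : Cᵀ * C = Matrix.diagonal d := by
    have e : Cᵀ * C = Qᵀ * (Mᵀ * M * Q) := by
      rw [hC, Matrix.transpose_mul, mul_assoc, ← mul_assoc Mᵀ]
    rw [e, hspec, ← hstarQ]
    calc star Q * (Q * Matrix.diagonal d * star Q * Q)
        = (star Q * Q) * Matrix.diagonal d * (star Q * Q) := by simp only [mul_assoc]
      _ = Matrix.diagonal d := by rw [hQ1]; simp
  have hcol : ∀ j, d j = 0 → ∀ i, C i j = 0 := by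
    intro j hj i
    have h1 : ∑ i, C i j * C i j = 0 := by
      have : (Cᵀ * C) j j = Matrix.diagonal d j j := by rw [hCC]
      simpa [Matrix.mul_apply, Matrix.diagonal_apply_eq, hj, mul_comm] using this
    have := (Finset.sum_eq_zero_iff_of_nonneg (fun i _ => mul_self_nonneg (C i j))).mp h1
    exact mul_self_eq_zero.mp (this i (Finset.mem_univ i))
  set v : Fin n → EuclideanSpace ℝ (Fin n) :=
    fun j => (WithLp.equiv 2 (Fin n → ℝ)).symm (fun i => C i j / g j) with hv
  set s : Set (Fin n) := {j | d j ≠ 0} with hs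
  have hgpos : ∀ j ∈ s, 0 < g j := by
    intro j hj
    exact Real.sqrt_pos.mpr (lt_of_le_of_ne (hdnn j) (Ne.symm hj))
  have horth : Orthonormal ℝ (s.restrict v) := by
    rw [orthonormal_iff_ite]
    rintro ⟨j, hj⟩ ⟨k, hk⟩
    have hinner : (inner ℝ (v j) (v k) : ℝ) = (Matrix.diagonal d) j k / (g j * g k) := by
      rw [← hCC]
      simp only [hv, EuclideanSpace.inner_eq_star_dotProduct]
      simp [dotProduct, Matrix.mul_apply, div_mul_div_comm, Finset.sum_div]
      exact Finset.sum_congr rfl fun i _ => by ring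
    by_cases hjk : j = k
    · subst hjk
      show inner ℝ (v j) (v j) = _
      simp only [Set.restrict_apply, hinner, Matrix.diagonal_apply_eq]
      rw [if_pos trivial, show g j * g j = d j from Real.mul_self_sqrt (hdnn j), div_self hj]
    · show inner ℝ (v j) (v k) = _
      simp only [Set.restrict_apply, hinner, Matrix.diagonal_apply_ne _ hjk]
      rw [if_neg (by simpa using hjk)]
      simp
  obtain ⟨b, hb⟩ := horth.exists_orthonormalBasis_extension_of_card_eq
    (by simpa using (finrank_euclideanSpace_fin (𝕜 := ℝ) (n := n)))
  set U : Matrix (Fin n) (Fin n) ℝ := Matrix.of (fun i j => b j i) with hUdef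
  have hUorth : Uᵀ * U = 1 := by
    ext j k
    have : (inner ℝ (b j) (b k) : ℝ) = if j = k then 1 else 0 :=
      orthonormal_iff_ite.mp b.orthonormal j k
    rw [EuclideanSpace.inner_eq_star_dotProduct] at this
    simp only [Matrix.mul_apply, Matrix.transpose_apply, Matrix.one_apply, hUdef, Matrix.of_apply]
    simpa [dotProduct, mul_comm] using this
  have hUg : U * Matrix.diagonal g = C := by
    ext i j
    rw [Matrix.mul_diagonal]
    by_cases hj : d j = 0
    · have : g j = 0 := by simp [hg, hj]
      rw [this, mul_zero, hcol j hj i]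
    · have hbj : b j = v j := hb j hj
      have : U i j = C i j / g j := by
        simp [hUdef, hbj, hv]
      rw [this, div_mul_cancel₀ _ (ne_of_gt (hgpos j hj))]
  have hM : M = U * Matrix.diagonal g * star Q := by
    have : M = C * star Q := by rw [hC, mul_assoc, hQ2, mul_one]
    rw [this, hUg]
  -- W := Q * Uᵀ
  have hUmem : U ∈ Matrix.unitaryGroup (Fin n) ℝ := by
    rw [Matrix.mem_unitaryGroup_iff']
    rw [Matrix.star_eq_conjTranspose, Matrix.conjTranspose_eq_transpose_of_trivial]
    exact hUorth
  refine ⟨Q * Uᵀ, ?_, ?_⟩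
  · have : Uᵀ ∈ Matrix.unitaryGroup (Fin n) ℝ := by
      have := Unitary.star_mem hUmem
      rwa [Matrix.star_eq_conjTranspose, Matrix.conjTranspose_eq_transpose_of_trivial] at this
    exact mul_mem hQmem this
  · have : Q * Uᵀ * M = Q * Matrix.diagonal g * star Q := by
      rw [hM]
      calc Q * Uᵀ * (U * Matrix.diagonal g * star Q)
          = Q * ((Uᵀ * U) * Matrix.diagonal g) * star Q := by simp only [mul_assoc]
        _ = Q * Matrix.diagonal g * star Q := by rw [hUorth, one_mul]
    rw [this, hstarQ, ← Matrix.conjTranspose_eq_transpose_of_trivial]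
    exact (Matrix.posSemidef_diagonal_iff.mpr hgnn).mul_mul_conjTranspose_same Q

lemma key_ineq {n : ℕ} {P : Matrix (Fin n) (Fin n) ℂ} (hP : P.PosSemidef)
    {U : Matrix (Fin n) (Fin n) ℂ} (hU : U ∈ Matrix.unitaryGroup (Fin n) ℂ) :
    (Matrix.trace (U * P)).re ≤ (Matrix.trace P).re := by
  obtain ⟨S, hSp, hSS⟩ := psd_sqrt hP
  have hSH : Sᴴ = S := hSp.1
  have hU1 : Uᴴ * U = 1 := by
    rw [← Matrix.star_eq_conjTranspose]; exact Matrix.mem_unitaryGroup_iff'.mp hU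
  have hconj : ∀ a i : Fin n, star (S a i) = S i a := by
    intro a i
    calc star (S a i) = Sᴴ i a := by rw [Matrix.conjTranspose_apply]
      _ = S i a := by rw [hSH]
  have ht : Matrix.trace (U * P) = Matrix.trace (S * U * S) := by
    rw [← hSS, ← mul_assoc, Matrix.trace_mul_comm (U * S) S, ← mul_assoc]
  have hdiag : ∀ i, (S * U * S) i i
      = dotProduct (star (fun j => S j i)) (U *ᵥ (fun j => S j i)) := by
    intro i
    simp only [Matrix.mul_apply, dotProduct, Matrix.mulVec, Pi.star_apply,
      Finset.sum_mul, Finset.mul_sum]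
    rw [Finset.sum_comm]
    refine Finset.sum_congr rfl fun a _ => Finset.sum_congr rfl fun c _ => ?_
    rw [hconj a i]
    ring
  have hdiagP : ∀ i, P i i = dotProduct (star (fun j => S j i)) (fun j => S j i) := by
    intro i
    conv_lhs => rw [← hSS]
    simp only [Matrix.mul_apply, dotProduct, Pi.star_apply]
    exact Finset.sum_congr rfl fun a _ => by rw [hconj a i]
  rw [ht]
  simp only [Matrix.trace, Matrix.diag, Complex.re_sum]
  refine Finset.sum_le_sum fun i _ => ?_
  set v : Fin n → ℂ := fun j => S j i with hvdef
  set x : EuclideanSpace ℂ (Fin n) := (WithLp.equiv 2 (Fin n → ℂ)).symm v with hx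
  set y : EuclideanSpace ℂ (Fin n) := (WithLp.equiv 2 (Fin n → ℂ)).symm (U *ᵥ v) with hy
  have h1 : (inner ℂ x y : ℂ) = dotProduct (star v) (U *ᵥ v) := by
    rw [EuclideanSpace.inner_eq_star_dotProduct, dotProduct_comm]
    rfl
  have h2 : (inner ℂ x x : ℂ) = dotProduct (star v) v := by
    rw [EuclideanSpace.inner_eq_star_dotProduct, dotProduct_comm]
    rfl
  have h3 : (inner ℂ y y : ℂ) = (inner ℂ x x : ℂ) := by
    rw [EuclideanSpace.inner_eq_star_dotProduct, h2, dotProduct_comm]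
    change star (U *ᵥ v) ⬝ᵥ (U *ᵥ v) = _
    rw [Matrix.star_mulVec, Matrix.dotProduct_mulVec, Matrix.vecMul_vecMul, hU1,
      Matrix.vecMul_one]
  have hnorm : ‖y‖ = ‖x‖ := by
    rw [norm_eq_sqrt_re_inner (𝕜 := ℂ), norm_eq_sqrt_re_inner (𝕜 := ℂ) x, h3]
  have hle : RCLike.re (inner ℂ x y : ℂ) ≤ RCLike.re (inner ℂ x x : ℂ) := by
    have h4 := re_inner_le_norm (𝕜 := ℂ) x y
    rw [hnorm, ← inner_self_eq_norm_mul_norm (𝕜 := ℂ)] at h4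
    exact h4
  rw [hdiag i, hdiagP i, ← h1, ← h2]
  exact hle

lemma frob_map {n l : ℕ} (X : Matrix (Fin n) (Fin l) ℝ) :
    frobR X = frobC (X.map Complex.ofReal) := by
  rw [frobR, frobC, mapC_conjTranspose, ← mapC_mul, trace_mapC_re]


/-- Corollary: for real `A, B` there is `W ∈ O(n)` with `WABᵀ` positive semidefinite
symmetric and `d_{O(n)}(A,B) = ‖WA − B‖ = d_{U(n)}(A,B)`; in particular the real and
complex orbit distances agree on real matrices. -/
theorem stmt12 (n l : ℕ) (hn : 0 < n) (hl : 0 < l) (A B : Matrix (Fin n) (Fin l) ℝ) :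
    ∃ W ∈ Matrix.orthogonalGroup (Fin n) ℝ,
      (W * (A * Bᵀ)).PosSemidef ∧
      dO A B = frobR (W * A - B) ∧
      dO A B = dU (A.map (Complex.ofReal)) (B.map (Complex.ofReal)) := by
  obtain ⟨W, hW, hPSD⟩ := polar_real (A * Bᵀ)
  set A' := A.map Complex.ofReal with hA'
  set B' := B.map Complex.ofReal with hB'
  set M' := (A * Bᵀ).map Complex.ofReal with hM'
  have hABt : A' * B'ᴴ = M' := by
    rw [hA', hB', mapC_conjTranspose, ← mapC_mul, hM']
  set c : ℝ := (Matrix.trace (A' * A'ᴴ)).re + (Matrix.trace (B' * B'ᴴ)).re with hc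
  have hfrob : ∀ V : Matrix (Fin n) (Fin n) ℂ, Vᴴ * V = 1 →
      frobC (V * A' - B') = Real.sqrt (c - 2 * (Matrix.trace (V * M')).re) := by
    intro V hV
    rw [frobC, frob_formula A' B' hV, hABt, hc]
  have hWmemU : star W * W = 1 := Matrix.mem_unitaryGroup_iff'.mp hW
  have hWt : Wᵀ * W = 1 := by
    rwa [Matrix.star_eq_conjTranspose, Matrix.conjTranspose_eq_transpose_of_trivial] at hWmemU
  set P := W * (A * Bᵀ) with hPdef
  have hMWP : A * Bᵀ = Wᵀ * P := by
    rw [hPdef, ← Matrix.mul_assoc, hWt, Matrix.one_mul]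
  have hWtmem : Wᵀ ∈ Matrix.orthogonalGroup (Fin n) ℝ := by
    have := Unitary.star_mem hW
    rwa [Matrix.star_eq_conjTranspose, Matrix.conjTranspose_eq_transpose_of_trivial] at this
  have hbound : ∀ V : Matrix (Fin n) (Fin n) ℂ, V ∈ Matrix.unitaryGroup (Fin n) ℂ →
      (Matrix.trace (V * M')).re ≤ Matrix.trace P := by
    intro V hV
    have h1 : M' = Wᵀ.map Complex.ofReal * P.map Complex.ofReal := by
      rw [hM', hMWP, mapC_mul]
    rw [h1, ← Matrix.mul_assoc]
    have hUU : V * Wᵀ.map Complex.ofReal ∈ Matrix.unitaryGroup (Fin n) ℂ :=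
      mul_mem hV (mapC_unitary hWtmem)
    have hki := key_ineq (mapC_posSemidef hPSD) hUU
    rwa [trace_mapC_re] at hki
  set m := frobR (W * A - B) with hm
  have hWu : (W.map Complex.ofReal)ᴴ * W.map Complex.ofReal = 1 := by
    have h5 := mapC_unitary hW
    rw [Matrix.mem_unitaryGroup_iff'] at h5
    rwa [Matrix.star_eq_conjTranspose] at h5
  have hWmap : (W * A - B).map Complex.ofReal = (W.map Complex.ofReal) * A' - B' := by
    rw [mapC_sub, mapC_mul, hA', hB']
  have hWfrob : m = Real.sqrt (c - 2 * Matrix.trace P) := by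
    rw [hm, frob_map, hWmap, hfrob _ hWu]
    congr 2
    rw [show W.map Complex.ofReal * M' = P.map Complex.ofReal by
      rw [hM', ← mapC_mul, hPdef]]
    rw [trace_mapC_re]
  have hlbC : ∀ x ∈ {x | ∃ V ∈ Matrix.unitaryGroup (Fin n) ℂ, x = frobC (V * A' - B')},
      m ≤ x := by
    rintro x ⟨V, hV, rfl⟩
    have hVu : Vᴴ * V = 1 := by
      have h6 := Matrix.mem_unitaryGroup_iff'.mp hV
      rwa [Matrix.star_eq_conjTranspose] at h6
    rw [hfrob V hVu, hWfrob]
    apply Real.sqrt_le_sqrt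
    have := hbound V hV
    linarith
  have hmemC : m ∈ {x | ∃ V ∈ Matrix.unitaryGroup (Fin n) ℂ, x = frobC (V * A' - B')} :=
    ⟨W.map Complex.ofReal, mapC_unitary hW, by rw [hm, frob_map, hWmap]⟩
  have hdU : dU A' B' = m := by
    rw [dU]
    exact IsLeast.csInf_eq ⟨hmemC, hlbC⟩
  have hlbO : ∀ x ∈ {x | ∃ V ∈ Matrix.orthogonalGroup (Fin n) ℝ, x = frobR (V * A - B)},
      m ≤ x := by
    rintro x ⟨V, hV, rfl⟩
    have hVmap : (V * A - B).map Complex.ofReal = (V.map Complex.ofReal) * A' - B' := by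
      rw [mapC_sub, mapC_mul, hA', hB']
    rw [frob_map, hVmap]
    exact hlbC _ ⟨V.map Complex.ofReal, mapC_unitary hV, rfl⟩
  have hdO : dO A B = m := by
    rw [dO]
    exact IsLeast.csInf_eq ⟨⟨W, hW, rfl⟩, hlbO⟩
  exact ⟨W, hW, hPSD, hdO, by rw [hdO, hdU]⟩
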